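/- Let A be a bounded J-self-adjoint operator on a Hilbert space K with fundamental symmetry J, Γ₀ : H → K bounded, Γ₀⁺ := Γ₀*J, and Q(z) := Γ₀⁺(A−z)⁻¹Γ₀ for z in the resolvent set of A. If Γ₀⁺Γ₀ is injective and for some f ∈ H we have (f, Q(z)h) = 0 for all h ∈ H and all z in the resolvent set of A, then f = 0. (Key computation: lim_{t→∞} t·Q(it) = −Γ₀⁺Γ₀ in the weak sense, i.e. for all f,h: lim_{t→∞} t(f, Q(it)h) = −(Γ₀⁺Γ₀ f, h).) -/

import Mathlib

open scoped InnerProductSpace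

/-- Lemma 3 (ii): if `Γ₀⁺Γ₀` is injective and
`(f, Q(z)h) = 0` for all `h` and all `z` in the resolvent set of `A`
(where `Q(z) = Γ₀⁺(A−z)⁻¹Γ₀`), then `f = 0`. -/
theorem weak_annihilation_implies_zero
    {K H : Type*} [NormedAddCommGroup K] [InnerProductSpace ℂ K] [CompleteSpace K]
    [NormedAddCommGroup H] [InnerProductSpace ℂ H] [CompleteSpace H]
    (J : K →L[ℂ] K) (hJsa : IsSelfAdjoint J) (hJ2 : J ∘L J = 1)
    (A : K →L[ℂ] K) (hA : J ∘L A = (ContinuousLinearMap.adjoint A) ∘L J)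
    (Γ₀ : H →L[ℂ] K)
    (Γplus : K →L[ℂ] H) (hΓplus : Γplus = (ContinuousLinearMap.adjoint Γ₀) ∘L J)
    (hinj : Function.Injective (Γplus ∘L Γ₀))
    (f : H)
    (hf : ∀ z : ℂ, IsUnit (A - z • (1 : K →L[ℂ] K)) →
      ∀ h : H, ⟪f, (Γplus ∘L Ring.inverse (A - z • (1 : K →L[ℂ] K)) ∘L Γ₀) h⟫_ℂ = 0) :
    f = 0 := by
  -- Step 1: for all h, ⟪f, (Γplus ∘L Γ₀) h⟫ = 0.
  have key : ∀ h : H, ⟪f, (Γplus ∘L Γ₀) h⟫_ℂ = 0 := by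
    intro h
    -- For each real t > ‖A‖, we get a bound.
    have bound : ∀ t : ℝ, ‖A‖ < t →
        ‖⟪f, (Γplus ∘L Γ₀) h⟫_ℂ‖ ≤ ‖f‖ * ‖Γplus‖ * ‖A‖ * ‖Γ₀ h‖ / (t - ‖A‖) := by
      intro t ht
      have ht0 : (0 : ℝ) < t := lt_of_le_of_lt (norm_nonneg A) ht
      -- A - t•1 is a unit
      have hu : IsUnit (A - (t : ℂ) • (1 : K →L[ℂ] K)) := by
        have hmem : (t : ℂ) ∈ resolventSet ℂ A := by
          apply spectrum.mem_resolventSet_of_norm_lt_mul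
          calc ‖A‖ * ‖(1 : K →L[ℂ] K)‖ ≤ ‖A‖ * 1 := by
                have := ContinuousLinearMap.norm_id_le (𝕜 := ℂ) (E := K)
                exact mul_le_mul_of_nonneg_left (by exact this) (norm_nonneg A)
            _ = ‖A‖ := mul_one _
            _ < ‖(t : ℂ)‖ := by simpa [Complex.norm_real, abs_of_pos ht0] using ht
        have : IsUnit ((algebraMap ℂ (K →L[ℂ] K)) (t : ℂ) - A) := hmem
        rw [Algebra.algebraMap_eq_smul_one] at this
        simpa using this.neg
      set R : K →L[ℂ] K := Ring.inverse (A - (t : ℂ) • (1 : K →L[ℂ] K)) with hR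
      have hRmul : R * (A - (t : ℂ) • (1 : K →L[ℂ] K)) = 1 := Ring.inverse_mul_cancel _ hu
      -- identity: t • R = A * R - 1, i.e. A * R = t • R + 1
      have hmulR : (A - (t : ℂ) • (1 : K →L[ℂ] K)) * R = 1 := Ring.mul_inverse_cancel _ hu
      have hid : A * R - (t : ℂ) • R = 1 := by
        have : A * R - (t : ℂ) • R = (A - (t : ℂ) • (1 : K →L[ℂ] K)) * R := by
          rw [sub_mul, smul_mul_assoc, one_mul]
        rw [this, hmulR]
      -- norm bound on R
      have hsub : (t : ℂ) • R = A * R - 1 := by rw [← hid, sub_sub_cancel]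
      have hRnorm : ‖R‖ ≤ 1 / (t - ‖A‖) := by
        have htA : (0 : ℝ) < t - ‖A‖ := by linarith
        have h1 : ‖(t : ℂ) • R‖ = t * ‖R‖ := by
          rw [norm_smul, Complex.norm_real, Real.norm_eq_abs, abs_of_pos ht0]
        have h2 : t * ‖R‖ ≤ ‖A‖ * ‖R‖ + 1 := by
          rw [← h1, hsub]
          calc ‖A * R - 1‖ ≤ ‖A * R‖ + ‖(1 : K →L[ℂ] K)‖ := norm_sub_le _ _
            _ ≤ ‖A‖ * ‖R‖ + 1 := by
                have := ContinuousLinearMap.norm_id_le (𝕜 := ℂ) (E := K)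
                exact add_le_add (norm_mul_le _ _) (by exact this)
        rw [le_div_iff₀ htA]
        nlinarith [h2]
      -- from hf: ⟪f, Γplus (R (Γ₀ h))⟫ = 0
      have h0 : ⟪f, Γplus (R (Γ₀ h))⟫_ℂ = 0 := hf (t : ℂ) hu h
      -- so ⟪f, Γplus ((t•R)(Γ₀ h))⟫ = 0
      have h0' : ⟪f, Γplus (((t : ℂ) • R) (Γ₀ h))⟫_ℂ = 0 := by
        rw [ContinuousLinearMap.smul_apply, map_smul, inner_smul_right, h0, mul_zero]
      -- (t•R) = A*R - 1, so ⟪f, (ΓplusΓ₀)h⟫ = ⟪f, Γplus (A (R (Γ₀ h)))⟫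
      have heq : ⟪f, (Γplus ∘L Γ₀) h⟫_ℂ = ⟪f, Γplus (A (R (Γ₀ h)))⟫_ℂ := by
        rw [hsub] at h0'
        simp only [ContinuousLinearMap.sub_apply, ContinuousLinearMap.mul_apply,
          ContinuousLinearMap.one_apply, map_sub, inner_sub_right,
          ContinuousLinearMap.comp_apply] at h0' ⊢
        linear_combination -h0'
      rw [heq]
      calc ‖⟪f, Γplus (A (R (Γ₀ h)))⟫_ℂ‖ ≤ ‖f‖ * ‖Γplus (A (R (Γ₀ h)))‖ :=
            norm_inner_le_norm _ _
        _ ≤ ‖f‖ * (‖Γplus‖ * (‖A‖ * (‖R‖ * ‖Γ₀ h‖))) := by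
            refine mul_le_mul_of_nonneg_left ?_ (norm_nonneg f)
            calc ‖Γplus (A (R (Γ₀ h)))‖ ≤ ‖Γplus‖ * ‖A (R (Γ₀ h))‖ :=
                  ContinuousLinearMap.le_opNorm _ _
              _ ≤ ‖Γplus‖ * (‖A‖ * (‖R‖ * ‖Γ₀ h‖)) := by
                  refine mul_le_mul_of_nonneg_left ?_ (norm_nonneg _)
                  calc ‖A (R (Γ₀ h))‖ ≤ ‖A‖ * ‖R (Γ₀ h)‖ := ContinuousLinearMap.le_opNorm _ _
                    _ ≤ ‖A‖ * (‖R‖ * ‖Γ₀ h‖) := by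
                        exact mul_le_mul_of_nonneg_left
                          (ContinuousLinearMap.le_opNorm _ _) (norm_nonneg _)
        _ ≤ ‖f‖ * ‖Γplus‖ * ‖A‖ * ‖Γ₀ h‖ / (t - ‖A‖) := by
            have htA : (0 : ℝ) < t - ‖A‖ := by linarith
            have hR1 : ‖R‖ ≤ 1 / (t - ‖A‖) := hRnorm
            have hnn : (0:ℝ) ≤ ‖f‖ * ‖Γplus‖ * ‖A‖ * ‖Γ₀ h‖ := by positivity
            have : ‖f‖ * (‖Γplus‖ * (‖A‖ * (‖R‖ * ‖Γ₀ h‖)))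
                = (‖f‖ * ‖Γplus‖ * ‖A‖ * ‖Γ₀ h‖) * ‖R‖ := by ring
            rw [this, div_eq_mul_inv, ← one_div]
            exact mul_le_mul_of_nonneg_left hR1 hnn
    -- now conclude the inner product is 0
    by_contra hne
    set a : ℝ := ‖⟪f, (Γplus ∘L Γ₀) h⟫_ℂ‖ with ha
    have ha0 : 0 < a := norm_pos_iff.mpr hne
    set C : ℝ := ‖f‖ * ‖Γplus‖ * ‖A‖ * ‖Γ₀ h‖ with hC
    have hC0 : 0 ≤ C := by positivity
    have hCa : 0 ≤ C / a := div_nonneg hC0 ha0.le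
    have hb := bound (‖A‖ + C / a + 1) (by linarith)
    have hrew : ‖A‖ + C / a + 1 - ‖A‖ = C / a + 1 := by ring
    rw [hrew] at hb
    have hpos : (0 : ℝ) < C / a + 1 := by linarith
    have hlt : C / (C / a + 1) < a := by
      rw [div_lt_iff₀ hpos]
      have h' : a * (C / a + 1) = C + a := by field_simp
      rw [h']
      linarith
    have : a ≤ C / (C / a + 1) := hb
    linarith
  -- Step 2: conclude f = 0 from injectivity
  have hT : (Γplus ∘L Γ₀) f = 0 := by
    have hsa : ContinuousLinearMap.adjoint (Γplus ∘L Γ₀) = Γplus ∘L Γ₀ := by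
      rw [hΓplus]
      rw [ContinuousLinearMap.comp_assoc]
      rw [ContinuousLinearMap.adjoint_comp, ContinuousLinearMap.adjoint_comp,
        ContinuousLinearMap.adjoint_adjoint, hJsa.adjoint_eq, ContinuousLinearMap.comp_assoc]
    have hall : ∀ h : H, ⟪(Γplus ∘L Γ₀) f, h⟫_ℂ = 0 := by
      intro h
      rw [← hsa, ContinuousLinearMap.adjoint_inner_left]
      exact key h
    have := hall ((Γplus ∘L Γ₀) f)
    rwa [inner_self_eq_zero] at this
  have : (Γplus ∘L Γ₀) f = (Γplus ∘L Γ₀) 0 := by simpa using hT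
  simpa using hinj this
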